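/- In the modified AKV model, every rank-one projection |w⟩⟨w| with w a unit vector in the interaction-free subspace W_D is a stationary state: ℒ_*(|w⟩⟨w|) = 0. More generally, every state whose range is contained in W_D satisfies ℒ_*(ρ) = 0. -/

import Mathlib

noncomputable section

open ContinuousLinearMap Finset
open scoped InnerProductSpace

/-- The Hilbert space ℂ^(N+M+1) of the modified AKV model. -/
abbrev AKVSpace (N M : ℕ) := EuclideanSpace ℂ (Fin (N + M + 1))

namespace AKV

variable (N M : ℕ)

/-- standard basis vector -/
def ket (i : Fin (N + M + 1)) : AKVSpace N M := EuclideanSpace.single i 1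

/-- rank-one operator |u⟩⟨v| : x ↦ ⟪v, x⟫ • u -/
def ketbra (u v : AKVSpace N M) : AKVSpace N M →L[ℂ] AKVSpace N M :=
  (innerSL ℂ v).smulRight u

/-- indices 2,…,N of the second level -/
def idx2 : Finset (Fin (N + M + 1)) := univ.filter fun i => 2 ≤ (i : ℕ) ∧ (i : ℕ) ≤ N
/-- indices N+1,…,N+M of the third level -/
def idx3 : Finset (Fin (N + M + 1)) := univ.filter fun i => N + 1 ≤ (i : ℕ)

/-- orthogonal projection onto span{e_0} -/
def P0 : AKVSpace N M →L[ℂ] AKVSpace N M := ketbra N M (ket N M 0) (ket N M 0)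
/-- orthogonal projection onto span{e_1} -/
def P1 : AKVSpace N M →L[ℂ] AKVSpace N M := ketbra N M (ket N M 1) (ket N M 1)
/-- orthogonal projection onto span{e_2,…,e_N} -/
def P2 : AKVSpace N M →L[ℂ] AKVSpace N M := ∑ i ∈ idx2 N M, ketbra N M (ket N M i) (ket N M i)
/-- orthogonal projection onto span{e_{N+1},…,e_{N+M}} -/
def P3 : AKVSpace N M →L[ℂ] AKVSpace N M := ∑ i ∈ idx3 N M, ketbra N M (ket N M i) (ket N M i)

/-- ψ = e_2 + ⋯ + e_N -/
def psi : AKVSpace N M := ∑ i ∈ idx2 N M, ket N M i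
/-- ψ' = e_{N+1} + ⋯ + e_{N+M} -/
def psi' : AKVSpace N M := ∑ i ∈ idx3 N M, ket N M i

/-- |Z| = Z⋆Z -/
def absZ (Z : AKVSpace N M →L[ℂ] AKVSpace N M) : AKVSpace N M →L[ℂ] AKVSpace N M :=
  adjoint Z * Z

/-- hypotheses on the interference operator Z of the modified AKV model -/
def IsAKVZ (hM : 1 ≤ M) (Z : AKVSpace N M →L[ℂ] AKVSpace N M) : Prop :=
  Z = P3 N M * Z * P2 N M ∧
  Z * adjoint Z = P3 N M ∧
  Z (ket N M ⟨N - 1, by omega⟩) = ((Real.sqrt ((N : ℝ) - 1))⁻¹ : ℂ) • psi' N M ∧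
  adjoint Z (ket N M ⟨N + 1, by omega⟩) = ((Real.sqrt ((N : ℝ) - 1))⁻¹ : ℂ) • psi N M

/-- the five Kraus operators -/
def kraus (Γ1m Γ1p Γ2m Γ2p Γ3m : ℝ) (Z : AKVSpace N M →L[ℂ] AKVSpace N M) :
    Fin 5 → AKVSpace N M →L[ℂ] AKVSpace N M :=
  ![((Real.sqrt (2 * Γ1m) : ℝ) : ℂ) • ketbra N M (psi N M) (ket N M 1),
    ((Real.sqrt (2 * ((N : ℝ) - 1) * Γ2m) : ℝ) : ℂ) • Z,
    ((Real.sqrt (2 * Γ3m) : ℝ) : ℂ) • ketbra N M (ket N M 0) (psi' N M),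
    ((Real.sqrt (2 * Γ1p) : ℝ) : ℂ) • ketbra N M (ket N M 1) (psi N M),
    ((Real.sqrt (2 * ((N : ℝ) - 1) * Γ2p) : ℝ) : ℂ) • adjoint Z]

/-- the effective Hamiltonian -/
def Heff (γ1m γ1p γ2m γ2p γ3m : ℝ) (Z : AKVSpace N M →L[ℂ] AKVSpace N M) :
    AKVSpace N M →L[ℂ] AKVSpace N M :=
  (γ1p : ℂ) • ketbra N M (psi N M) (psi N M)
    - (((N : ℂ) - 1) * (γ1m : ℂ)) • ketbra N M (ket N M 1) (ket N M 1)
    + (((N : ℂ) - 1) * (γ2p : ℂ)) • P3 N M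
    - (((N : ℂ) - 1) * (γ2m : ℂ)) • absZ N M Z
    - (γ3m : ℂ) • ketbra N M (psi' N M) (psi' N M)

/-- the predual GKSL generator ℒ_* of the modified AKV model -/
def Lstar (Γ1m Γ1p Γ2m Γ2p Γ3m γ1m γ1p γ2m γ2p γ3m : ℝ)
    (Z ρ : AKVSpace N M →L[ℂ] AKVSpace N M) : AKVSpace N M →L[ℂ] AKVSpace N M :=
  -Complex.I • (Heff N M γ1m γ1p γ2m γ2p γ3m Z * ρ - ρ * Heff N M γ1m γ1p γ2m γ2p γ3m Z)
    + ∑ k : Fin 5,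
        (kraus N M Γ1m Γ1p Γ2m Γ2p Γ3m Z k * ρ * adjoint (kraus N M Γ1m Γ1p Γ2m Γ2p Γ3m Z k)
          - (1 / 2 : ℂ) • (adjoint (kraus N M Γ1m Γ1p Γ2m Γ2p Γ3m Z k) *
                kraus N M Γ1m Γ1p Γ2m Γ2p Γ3m Z k * ρ
              + ρ * (adjoint (kraus N M Γ1m Γ1p Γ2m Γ2p Γ3m Z k) *
                kraus N M Γ1m Γ1p Γ2m Γ2p Γ3m Z k)))

/-- a state: positive semidefinite with trace one -/
def IsState (ρ : AKVSpace N M →L[ℂ] AKVSpace N M) : Prop :=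
  ρ.IsPositive ∧ LinearMap.trace ℂ (AKVSpace N M) ↑ρ = 1

/-- the interaction-free subspace W_D -/
def WD (Z : AKVSpace N M →L[ℂ] AKVSpace N M) : Submodule ℂ (AKVSpace N M) :=
  (Submodule.span ℂ {ket N M 1, psi N M, psi' N M})ᗮ ⊓
    LinearMap.ker (Z : AKVSpace N M →ₗ[ℂ] AKVSpace N M) ⊓ LinearMap.ker (adjoint Z : AKVSpace N M →ₗ[ℂ] AKVSpace N M)

/-- the subspace V = {e_0, e_1, ψ, ψ', Zψ, Z⋆ψ'}^⊥ -/
def Vsub (Z : AKVSpace N M →L[ℂ] AKVSpace N M) : Submodule ℂ (AKVSpace N M) :=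
  (Submodule.span ℂ
    {ket N M 0, ket N M 1, psi N M, psi' N M, Z (psi N M), adjoint Z (psi' N M)})ᗮ

/-- Im|Z| ∩ {ψ, Z⋆ψ'}^⊥ -/
def subA (Z : AKVSpace N M →L[ℂ] AKVSpace N M) : Submodule ℂ (AKVSpace N M) :=
  LinearMap.range (absZ N M Z : AKVSpace N M →ₗ[ℂ] AKVSpace N M) ⊓ (Submodule.span ℂ {psi N M, adjoint Z (psi' N M)})ᗮ

/-- ran P₃ ∩ {ψ', Zψ}^⊥ -/
def subB (Z : AKVSpace N M →L[ℂ] AKVSpace N M) : Submodule ℂ (AKVSpace N M) :=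
  LinearMap.range (P3 N M : AKVSpace N M →ₗ[ℂ] AKVSpace N M) ⊓ (Submodule.span ℂ {psi' N M, Z (psi N M)})ᗮ

/-- the orthogonal projection onto a subspace, as an operator on the whole space -/
def projOp (U : Submodule ℂ (AKVSpace N M)) : AKVSpace N M →L[ℂ] AKVSpace N M :=
  U.subtypeL ∘L U.orthogonalProjectionOnto



set_option maxHeartbeats 1000000
set_option synthInstance.maxHeartbeats 1000000

section Aux



lemma ketbra_apply' (u v x : AKVSpace N M) : ketbra N M u v x = ⟪v, x⟫_ℂ • u := rfl

lemma adjoint_ketbra (u v : AKVSpace N M) :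
    ContinuousLinearMap.adjoint (ketbra N M u v) = ketbra N M v u := by
  symm
  rw [ContinuousLinearMap.eq_adjoint_iff]
  intro x y
  simp only [ketbra_apply', inner_smul_left, inner_smul_right, inner_conj_symm]
  ring

lemma smul_op_zero (c : ℂ) : c • (0 : AKVSpace N M →L[ℂ] AKVSpace N M) = 0 := by
  ext x; simp

lemma star_ketbra' (u v : AKVSpace N M) : star (ketbra N M u v) = ketbra N M v u := by
  rw [ContinuousLinearMap.star_eq_adjoint]; exact adjoint_ketbra N M u v

lemma ketbra_mul_eq_zero (u v : AKVSpace N M) (ρ : AKVSpace N M →L[ℂ] AKVSpace N M)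
    (h : ∀ x, ⟪v, ρ x⟫_ℂ = 0) : ketbra N M u v * ρ = 0 := by
  ext x
  simp [ContinuousLinearMap.mul_apply, ketbra_apply', h]

lemma mul_adj_eq_zero (A ρ : AKVSpace N M →L[ℂ] AKVSpace N M)
    (hsa : ContinuousLinearMap.adjoint ρ = ρ) (h : A * ρ = 0) :
    ρ * ContinuousLinearMap.adjoint A = 0 := by
  refine ContinuousLinearMap.ext fun x => ?_
  refine ext_inner_right ℂ fun y => ?_
  rw [ContinuousLinearMap.mul_apply, ← hsa, adjoint_inner_left, adjoint_inner_left,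
    ← ContinuousLinearMap.mul_apply, h]
  simp

lemma Lstar_eq_zero_aux (hM1 : 1 ≤ M)
    (Γ1m Γ1p Γ2m Γ2p Γ3m γ1m γ1p γ2m γ2p γ3m : ℝ)
    (Z ρ : AKVSpace N M →L[ℂ] AKVSpace N M) (hZ : IsAKVZ N M hM1 Z)
    (hsa : ContinuousLinearMap.adjoint ρ = ρ)
    (hr : ∀ x, ρ x ∈ WD N M Z) :
    Lstar N M Γ1m Γ1p Γ2m Γ2p Γ3m γ1m γ1p γ2m γ2p γ3m Z ρ = 0 := by
  have h1 : ∀ x, ⟪ket N M 1, ρ x⟫_ℂ = 0 := fun x =>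
    (hr x).1.1 _ (Submodule.subset_span (by simp))
  have hpsi : ∀ x, ⟪psi N M, ρ x⟫_ℂ = 0 := fun x =>
    (hr x).1.1 _ (Submodule.subset_span (by simp))
  have hpsi' : ∀ x, ⟪psi' N M, ρ x⟫_ℂ = 0 := fun x =>
    (hr x).1.1 _ (Submodule.subset_span (by simp))
  have hkZ : ∀ x, Z (ρ x) = 0 := fun x => (hr x).1.2
  have hkZs : ∀ x, ContinuousLinearMap.adjoint Z (ρ x) = 0 := fun x => (hr x).2
  have hZρ : Z * ρ = 0 := by ext x; simp [ContinuousLinearMap.mul_apply, hkZ]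
  have hZsρ : ContinuousLinearMap.adjoint Z * ρ = 0 := by
    ext x; simp [ContinuousLinearMap.mul_apply, hkZs]
  have hP3ρ : P3 N M * ρ = 0 := by rw [← hZ.2.1, mul_assoc, hZsρ, mul_zero]
  have habs : absZ N M Z * ρ = 0 := by rw [absZ, mul_assoc, hZρ, mul_zero]
  have hb1 : ketbra N M (psi N M) (psi N M) * ρ = 0 := ketbra_mul_eq_zero N M _ _ ρ hpsi
  have hb2 : ketbra N M (ket N M 1) (ket N M 1) * ρ = 0 := ketbra_mul_eq_zero N M _ _ ρ h1
  have hb3 : ketbra N M (psi' N M) (psi' N M) * ρ = 0 := ketbra_mul_eq_zero N M _ _ ρ hpsi'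
  have hb4 : ketbra N M (psi N M) (ket N M 1) * ρ = 0 := ketbra_mul_eq_zero N M _ _ ρ h1
  have hb5 : ketbra N M (ket N M 0) (psi' N M) * ρ = 0 := ketbra_mul_eq_zero N M _ _ ρ hpsi'
  have hb6 : ketbra N M (ket N M 1) (psi N M) * ρ = 0 := ketbra_mul_eq_zero N M _ _ ρ hpsi
  have hHρ : Heff N M γ1m γ1p γ2m γ2p γ3m Z * ρ = 0 := by
    simp only [Heff, sub_mul, add_mul, smul_mul_assoc, hP3ρ, habs, hb1, hb2, hb3,
      smul_op_zero, sub_zero, add_zero, sub_self, zero_sub, neg_zero]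
  have hρH : ρ * Heff N M γ1m γ1p γ2m γ2p γ3m Z = 0 := by
    have hadj : ContinuousLinearMap.adjoint (Heff N M γ1m γ1p γ2m γ2p γ3m Z) * ρ = 0 := by
      refine ContinuousLinearMap.ext fun x => ?_
      refine ext_inner_right ℂ fun y => ?_
      rw [ContinuousLinearMap.mul_apply, adjoint_inner_left]
      have hR1 : ⟪ρ x, psi N M⟫_ℂ = 0 := by rw [← inner_conj_symm, hpsi, map_zero]
      have hR2 : ⟪ρ x, ket N M 1⟫_ℂ = 0 := by rw [← inner_conj_symm, h1, map_zero]
      have hR3 : ⟪ρ x, psi' N M⟫_ℂ = 0 := by rw [← inner_conj_symm, hpsi', map_zero]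
      have hRP3 : ⟪ρ x, P3 N M y⟫_ℂ = 0 := by
        rw [← hZ.2.1, ContinuousLinearMap.mul_apply, ← adjoint_inner_left, hkZs,
          inner_zero_left]
      have hRabs : ⟪ρ x, absZ N M Z y⟫_ℂ = 0 := by
        rw [absZ, ContinuousLinearMap.mul_apply, adjoint_inner_right, hkZ, inner_zero_left]
      simp only [Heff, ContinuousLinearMap.sub_apply, ContinuousLinearMap.add_apply,
        ContinuousLinearMap.smul_apply, inner_sub_right, inner_add_right, inner_smul_right,
        ketbra_apply', hR1, hR2, hR3, hRP3, hRabs, mul_zero, sub_zero, add_zero, sub_self,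
        ContinuousLinearMap.zero_apply, inner_zero_left]
    have h := mul_adj_eq_zero N M _ ρ hsa hadj
    rwa [ContinuousLinearMap.adjoint_adjoint] at h
  have hK : ∀ k, kraus N M Γ1m Γ1p Γ2m Γ2p Γ3m Z k * ρ = 0 := by
    intro k
    fin_cases k <;>
      simp [kraus, smul_mul_assoc, hZρ, hZsρ, hb4, hb5, hb6, smul_op_zero]
  have hρK : ∀ k, ρ * ContinuousLinearMap.adjoint (kraus N M Γ1m Γ1p Γ2m Γ2p Γ3m Z k) = 0 :=
    fun k => mul_adj_eq_zero N M _ ρ hsa (hK k)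
  rw [Lstar, hHρ, hρH, sub_zero, smul_op_zero, zero_add]
  refine Finset.sum_eq_zero fun k _ => ?_
  have e1 : kraus N M Γ1m Γ1p Γ2m Γ2p Γ3m Z k * ρ *
      ContinuousLinearMap.adjoint (kraus N M Γ1m Γ1p Γ2m Γ2p Γ3m Z k) = 0 := by
    rw [hK k, zero_mul]
  have e2 : ContinuousLinearMap.adjoint (kraus N M Γ1m Γ1p Γ2m Γ2p Γ3m Z k) *
      kraus N M Γ1m Γ1p Γ2m Γ2p Γ3m Z k * ρ = 0 := by
    rw [mul_assoc, hK k, mul_zero]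
  have e3 : ρ * (ContinuousLinearMap.adjoint (kraus N M Γ1m Γ1p Γ2m Γ2p Γ3m Z k) *
      kraus N M Γ1m Γ1p Γ2m Γ2p Γ3m Z k) = 0 := by
    rw [← mul_assoc, hρK k, zero_mul]
  rw [e1, e2, e3]
  simp

end Aux

/-- In the modified AKV model, every rank-one projection `|w⟩⟨w|` with `w` a unit vector in the
interaction-free subspace `W_D` is a stationary state, and more generally every state whose
range is contained in `W_D` is stationary. -/
theorem stationary_of_range_le_WD
    (N M : ℕ) (hN : 3 ≤ N) (hM1 : 1 ≤ M) (hM2 : M ≤ N - 1)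
    (Γ1m Γ1p Γ2m Γ2p Γ3m γ1m γ1p γ2m γ2p γ3m : ℝ)
    (hΓ : 0 < Γ1m ∧ 0 < Γ1p ∧ 0 < Γ2m ∧ 0 < Γ2p ∧ 0 < Γ3m)
    (hγ : 0 < γ1m ∧ 0 < γ1p ∧ 0 < γ2m ∧ 0 < γ2p ∧ 0 < γ3m)
    (Z : AKVSpace N M →L[ℂ] AKVSpace N M) (hZ : IsAKVZ N M hM1 Z) :
    (∀ w : AKVSpace N M, ‖w‖ = 1 → w ∈ WD N M Z →
      Lstar N M Γ1m Γ1p Γ2m Γ2p Γ3m γ1m γ1p γ2m γ2p γ3m Z (ketbra N M w w) = 0) ∧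
    (∀ ρ : AKVSpace N M →L[ℂ] AKVSpace N M, IsState N M ρ →
      LinearMap.range (ρ : AKVSpace N M →ₗ[ℂ] AKVSpace N M) ≤ WD N M Z →
      Lstar N M Γ1m Γ1p Γ2m Γ2p Γ3m γ1m γ1p γ2m γ2p γ3m Z ρ = 0) := by
  have main : ∀ ρ : AKVSpace N M →L[ℂ] AKVSpace N M, ContinuousLinearMap.adjoint ρ = ρ →
      (∀ x, ρ x ∈ WD N M Z) →
      Lstar N M Γ1m Γ1p Γ2m Γ2p Γ3m γ1m γ1p γ2m γ2p γ3m Z ρ = 0 := fun ρ h1 h2 =>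
    Lstar_eq_zero_aux N M hM1 Γ1m Γ1p Γ2m Γ2p Γ3m γ1m γ1p γ2m γ2p γ3m Z ρ hZ h1 h2
  constructor
  · intro w hw hwWD
    refine main _ ?_ ?_
    · exact adjoint_ketbra N M w w
    · intro x
      rw [ketbra_apply']
      exact (WD N M Z).smul_mem _ hwWD
  · intro ρ hρ hrange
    refine main ρ ?_ fun x => hrange ⟨x, rfl⟩
    rw [← ContinuousLinearMap.star_eq_adjoint]
    exact hρ.1.isSelfAdjoint


end AKV
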